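/- Let μ be a probability measure on S^{d-1}, M = ∫ y dμ(y), R = ‖M‖ > 0, U = M/R, and fix β ∈ (0, π/2). Then the mass of the antipodal cap is bounded: μ(S_β^−(U)) ≤ (1 − R)/(1 + cos β), where S_β^−(U) = {x ∈ S^{d-1} : ⟨x, −U⟩ ≥ cos β}. -/

import Mathlib

open MeasureTheory
open scoped RealInnerProductSpace

/-- for a probability measure `μ` on the unit sphere with mean `M`,
`R = ‖M‖ > 0`, `U = M/R`, and `β ∈ (0, π/2)`, the antipodal cap
`S_β^-(U) = {x ∈ S^{d-1} : ⟪x,-U⟫ ≥ cos β}` has mass at most `(1-R)/(1+cos β)`. -/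
theorem stmt11 {d : ℕ} (μ : Measure (EuclideanSpace ℝ (Fin d))) [IsProbabilityMeasure μ]
    (hsphere : μ {x | ‖x‖ ≠ 1} = 0)
    (hint : Integrable (fun y : EuclideanSpace ℝ (Fin d) => y) μ)
    (M : EuclideanSpace ℝ (Fin d)) (hM : M = ∫ y, y ∂μ)
    (R : ℝ) (hR : R = ‖M‖) (hRpos : 0 < R)
    (U : EuclideanSpace ℝ (Fin d)) (hU : U = R⁻¹ • M)
    (β : ℝ) (hβ : β ∈ Set.Ioo 0 (Real.pi / 2)) :
    μ {x | ‖x‖ = 1 ∧ Real.cos β ≤ ⟪x, -U⟫}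
      ≤ ENNReal.ofReal ((1 - R) / (1 + Real.cos β)) := by
  obtain ⟨hβ0, hβ2⟩ := hβ
  have hcos : 0 < Real.cos β := Real.cos_pos_of_mem_Ioo ⟨by linarith [Real.pi_pos], hβ2⟩
  have hε : (0:ℝ) < 1 + Real.cos β := by linarith
  set f : EuclideanSpace ℝ (Fin d) → ℝ := fun x => 1 - ⟪U, x⟫ with hf
  have hUnorm : ‖U‖ = 1 := by
    rw [hU, norm_smul, norm_inv, Real.norm_eq_abs, abs_of_pos hRpos, ← hR,
      inv_mul_cancel₀ hRpos.ne']
  -- integrability of f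
  have hinner : Integrable (fun x => ⟪U, x⟫) μ :=
    (innerSL ℝ U).integrable_comp hint
  have hfint : Integrable f μ := (integrable_const (1:ℝ)).sub hinner
  -- f nonneg a.e.
  have hfnn : 0 ≤ᵐ[μ] f := by
    have : ∀ᵐ x ∂μ, ‖x‖ = 1 := by
      rw [ae_iff]; exact hsphere
    filter_upwards [this] with x hx
    have := abs_real_inner_le_norm U x
    rw [hUnorm, hx] at this
    simp only [hf, Pi.zero_apply]
    nlinarith [abs_nonneg (⟪U, x⟫), le_abs_self (⟪U, x⟫)]
  -- integral of f
  have hUM : ⟪U, M⟫ = R := by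
    rw [hU, real_inner_smul_left, real_inner_self_eq_norm_sq, ← hR]
    field_simp
  have hintf : ∫ x, f x ∂μ = 1 - R := by
    rw [hf]
    rw [integral_sub (integrable_const 1) hinner, integral_const, integral_inner hint, ← hM,
      hUM]
    simp
  have hR1 : R ≤ 1 := by
    have h1 : ∀ᵐ x ∂μ, ‖x‖ = 1 := by rw [ae_iff]; exact hsphere
    have hn1 : ∫ y, ‖y‖ ∂μ = 1 := by
      rw [integral_congr_ae (h1.mono fun x hx => hx), integral_const]; simp
    calc R = ‖∫ y, y ∂μ‖ := by rw [hR, hM]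
      _ ≤ ∫ y, ‖y‖ ∂μ := norm_integral_le_integral_norm _
      _ = 1 := hn1
  -- Markov
  have hmarkov := mul_meas_ge_le_integral_of_nonneg hfnn hfint (1 + Real.cos β)
  rw [hintf] at hmarkov
  have hsub : {x : EuclideanSpace ℝ (Fin d) | ‖x‖ = 1 ∧ Real.cos β ≤ ⟪x, -U⟫}
      ⊆ {x | 1 + Real.cos β ≤ f x} := by
    intro x hx
    have h2 := hx.2
    rw [inner_neg_right] at h2
    have : ⟪U, x⟫ = ⟪x, U⟫ := real_inner_comm x U
    simp only [Set.mem_setOf_eq, hf]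
    linarith
  have hfin : μ {x | 1 + Real.cos β ≤ f x} ≠ ⊤ := measure_ne_top μ _
  calc μ {x | ‖x‖ = 1 ∧ Real.cos β ≤ ⟪x, -U⟫}
      ≤ μ {x | 1 + Real.cos β ≤ f x} := measure_mono hsub
    _ ≤ ENNReal.ofReal ((1 - R) / (1 + Real.cos β)) := by
        rw [ENNReal.le_ofReal_iff_toReal_le hfin (div_nonneg (by linarith) hε.le)]
        rw [le_div_iff₀ hε]
        have hm : (1 + Real.cos β) * (μ {x | 1 + Real.cos β ≤ f x}).toReal ≤ 1 - R := hmarkov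
        linarith [hm]
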